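/- For every θ ∈ ℝⁿ, the point η = ∇ψ(θ), whose components are η_i = e^{θ_i}/(1 + Σ_{j=1}^n e^{θ_j}), lies in Δ_n, and the Hessians of φ and ψ are mutually inverse matrices at corresponding points: ∇²φ(η) · ∇²ψ(θ) = I. -/

import Mathlib

open Filter

noncomputable section

abbrev E (n : ℕ) := EuclideanSpace ℝ (Fin n)

/-- The open probability simplex `S_n` inside `ℝ^{n+1}`. -/
def simplex (n : ℕ) : Set (Fin (n+1) → ℝ) :=
  {p | (∀ i, 0 < p i) ∧ ∑ i, p i = 1}

/-- The mixture (`η`) coordinate domain `Δ_n`. -/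
def Δset (n : ℕ) : Set (E n) := {η | (∀ i, 0 < η i) ∧ ∑ i, η i < 1}

/-- The distribution in `S_n` corresponding to `η` coordinates. -/
def mixDist {n : ℕ} (η : E n) : Fin (n+1) → ℝ :=
  Fin.snoc (fun i => η i) (1 - ∑ i, η i)

/-- The distribution in `S_n` corresponding to `θ` coordinates. -/
def expDist {n : ℕ} (θ : E n) : Fin (n+1) → ℝ :=
  Fin.snoc (fun i => Real.exp (θ i) / (1 + ∑ j, Real.exp (θ j)))
    (1 / (1 + ∑ j, Real.exp (θ j)))

/-- The `η` coordinates of a distribution `q ∈ S_n`. -/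
def etaCoord {n : ℕ} (q : Fin (n+1) → ℝ) : E n := WithLp.toLp 2 (fun i => q i.castSucc)

/-- The `θ` coordinates of a distribution `q ∈ S_n`. -/
def thetaCoord {n : ℕ} (q : Fin (n+1) → ℝ) : E n :=
  WithLp.toLp 2 (fun i => Real.log (q i.castSucc / q (Fin.last n)))

/-- Kullback–Leibler divergence `D(q‖p)`. -/
def KL {n : ℕ} (q p : Fin (n+1) → ℝ) : ℝ := ∑ i, q i * Real.log (q i / p i)

/-- Log-partition function `ψ(θ) = log(1 + Σ e^{θ_i})`. -/
def psi {n : ℕ} (θ : E n) : ℝ := Real.log (1 + ∑ i, Real.exp (θ i))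

/-- Negative entropy `φ(η)`. -/
def phi {n : ℕ} (η : E n) : ℝ :=
  (∑ i, η i * Real.log (η i)) + (1 - ∑ i, η i) * Real.log (1 - ∑ i, η i)

/-- The loss `L_q` in `η` coordinates: `η ↦ D(q ‖ p(η))`. -/
def Leta {n : ℕ} (q : Fin (n+1) → ℝ) (η : E n) : ℝ := KL q (mixDist η)

/-- The loss `L_q` in `θ` coordinates: `θ ↦ D(q ‖ p(θ))`. -/
def Ltheta {n : ℕ} (q : Fin (n+1) → ℝ) (θ : E n) : ℝ := KL q (expDist θ)

/-- The Hessian of `f : ℝⁿ → ℝ` at `x`, as the `n × n` matrix of second partial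
derivatives. -/
def hess {n : ℕ} (f : E n → ℝ) (x : E n) : Matrix (Fin n) (Fin n) ℝ :=
  Matrix.of fun i j =>
    fderiv ℝ (fun y => fderiv ℝ f y (EuclideanSpace.single j 1)) x (EuclideanSpace.single i 1)

/-- The set of (real) eigenvalues of a matrix. -/
def lamSet {n : ℕ} (A : Matrix (Fin n) (Fin n) ℝ) : Set ℝ :=
  {μ | ∃ v : Fin n → ℝ, v ≠ 0 ∧ A.mulVec v = μ • v}

/-- Largest eigenvalue `λ_max`. -/
def lamMax {n : ℕ} (A : Matrix (Fin n) (Fin n) ℝ) : ℝ := sSup (lamSet A)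

/-- Smallest eigenvalue `λ_min`. -/
def lamMin {n : ℕ} (A : Matrix (Fin n) (Fin n) ℝ) : ℝ := sInf (lamSet A)

/-- Condition number `cond(A) = λ_max(A)/λ_min(A)`. -/
def condNum {n : ℕ} (A : Matrix (Fin n) (Fin n) ℝ) : ℝ := lamMax A / lamMin A

/-- Operator 2-norm of a matrix (induced by the Euclidean norm). -/
def opNorm {n : ℕ} (A : Matrix (Fin n) (Fin n) ℝ) : ℝ :=
  ‖Matrix.toEuclideanCLM (𝕜 := ℝ) A‖


section aux
variable {n : ℕ}

def projL (i : Fin n) : E n →L[ℝ] ℝ := EuclideanSpace.proj i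

@[simp] lemma projL_single (i j : Fin n) : projL i (EuclideanSpace.single j 1) = if i = j then (1:ℝ) else 0 := by
  have : projL i (EuclideanSpace.single j 1) = (EuclideanSpace.single j (1:ℝ) : E n) i := rfl
  rw [this, EuclideanSpace.single_apply]

lemma hasFDerivAt_sum (y : E n) :
    HasFDerivAt (fun z : E n => ∑ i, z i) (∑ i, projL i) y := by
  have : HasFDerivAt (fun z : E n => ∑ i, z i) (∑ i : Fin n, projL i) y := by
    apply HasFDerivAt.fun_sum
    intro i _
    exact (projL i).hasFDerivAt
  exact this

lemma hasFDerivAt_S (y : E n) :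
    HasFDerivAt (fun z : E n => ∑ i, Real.exp (z i)) (∑ i, Real.exp (y i) • projL i) y := by
  apply HasFDerivAt.fun_sum
  intro i _
  exact (Real.hasDerivAt_exp (y i)).comp_hasFDerivAt y (projL i).hasFDerivAt

lemma Spos (y : E n) : (0:ℝ) < 1 + ∑ i, Real.exp (y i) := by
  positivity

lemma hasFDerivAt_psi (y : E n) :
    HasFDerivAt psi ((1 + ∑ i, Real.exp (y i))⁻¹ • ∑ i, Real.exp (y i) • projL i) y := by
  have h1 : HasFDerivAt (fun z : E n => 1 + ∑ i, Real.exp (z i)) (∑ i, Real.exp (y i) • projL i) y :=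
    (hasFDerivAt_S y).const_add 1
  exact (Real.hasDerivAt_log (Spos y).ne').comp_hasFDerivAt y h1

lemma fderiv_psi_apply (y : E n) (j : Fin n) :
    fderiv ℝ psi y (EuclideanSpace.single j 1) =
      Real.exp (y j) / (1 + ∑ i, Real.exp (y i)) := by
  rw [(hasFDerivAt_psi y).fderiv]
  simp [ContinuousLinearMap.smul_apply, ContinuousLinearMap.sum_apply, mul_ite,
    Finset.sum_ite_eq, div_eq_inv_mul]


/-- The eta coordinate as function of θ. -/
def etaF (j : Fin n) (y : E n) : ℝ := Real.exp (y j) / (1 + ∑ i, Real.exp (y i))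

lemma hasFDerivAt_etaF (j : Fin n) (y : E n) :
    HasFDerivAt (etaF j)
      (Real.exp (y j) • (-((1 + ∑ i, Real.exp (y i)) ^ 2)⁻¹ • (∑ i, Real.exp (y i) • projL i))
        + (1 + ∑ i, Real.exp (y i))⁻¹ • (Real.exp (y j) • projL j)) y := by
  have hnum : HasFDerivAt (fun z : E n => Real.exp (z j)) (Real.exp (y j) • projL j) y :=
    (Real.hasDerivAt_exp (y j)).comp_hasFDerivAt (f := fun z : E n => z j) y (projL j).hasFDerivAt
  have hden : HasFDerivAt (fun z : E n => 1 + ∑ i, Real.exp (z i))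
      (∑ i, Real.exp (y i) • projL i) y := (hasFDerivAt_S y).const_add 1
  have hinv : HasFDerivAt (fun z : E n => (1 + ∑ i, Real.exp (z i))⁻¹)
      (-((1 + ∑ i, Real.exp (y i)) ^ 2)⁻¹ • (∑ i, Real.exp (y i) • projL i)) y := by
    have := (hasDerivAt_inv (Spos y).ne').comp_hasFDerivAt y hden
    exact this.congr_fderiv (by rw [neg_smul])
  have := hnum.mul hinv
  simp only [← div_eq_mul_inv] at this
  exact this.congr_of_eventuallyEq (Filter.Eventually.of_forall fun z => by simp [etaF, div_eq_mul_inv])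

lemma hess_psi_apply (θ : E n) (i j : Fin n) :
    fderiv ℝ (fun y => fderiv ℝ psi y (EuclideanSpace.single j 1)) θ (EuclideanSpace.single i 1)
      = (if i = j then etaF j θ else 0) - etaF i θ * etaF j θ := by
  have hcongr : (fun y : E n => fderiv ℝ psi y (EuclideanSpace.single j 1)) = etaF j := by
    funext y; exact fderiv_psi_apply y j
  rw [hcongr, (hasFDerivAt_etaF j θ).fderiv]
  have hS := (Spos θ).ne'
  simp only [ContinuousLinearMap.add_apply, ContinuousLinearMap.smul_apply, neg_smul,
    ContinuousLinearMap.neg_apply, ContinuousLinearMap.sum_apply, projL_single,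
    smul_eq_mul, mul_ite, mul_one, mul_zero, Finset.sum_ite_eq', Finset.mem_univ, if_true]
  by_cases h : i = j
  · subst h
    simp only [if_pos rfl, etaF]
    field_simp
    ring
  · rw [if_neg (fun hh : j = i => h hh.symm), if_neg h]
    simp only [etaF]
    field_simp
    ring

lemma gradient_psi (θ : E n) (i : Fin n) : gradient psi θ i = etaF i θ := by
  have h1 : (gradient psi θ) i
      = @inner ℝ _ _ (gradient psi θ) (EuclideanSpace.single i (1:ℝ)) := by
    rw [EuclideanSpace.inner_single_right]
    simp
  have h3 : @inner ℝ _ _ (gradient psi θ) (EuclideanSpace.single i (1:ℝ))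
      = fderiv ℝ psi θ (EuclideanSpace.single i 1) :=
    InnerProductSpace.toDual_symm_apply
  rw [h1, h3, fderiv_psi_apply]
  rfl

lemma isOpen_Δ : IsOpen (Δset n) := by
  have h1 : IsOpen {y : E n | ∀ i, 0 < y i} := by
    have : {y : E n | ∀ i, 0 < y i} = ⋂ i, {y : E n | 0 < y i} := by
      ext y; simp
    rw [this]
    exact isOpen_iInter_of_finite fun i =>
      isOpen_lt continuous_const (projL i).continuous
  have h2 : IsOpen {y : E n | ∑ i, y i < 1} := by
    refine isOpen_lt ?_ continuous_const
    exact continuous_finset_sum _ fun i _ => (projL i).continuous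
  exact (h1.inter h2)

lemma grad_mem_Δ (θ : E n) : gradient psi θ ∈ Δset n := by
  constructor
  · intro i
    rw [gradient_psi]
    exact div_pos (Real.exp_pos _) (Spos θ)
  · have : ∑ i, gradient psi θ i = (∑ i, Real.exp (θ i)) / (1 + ∑ i, Real.exp (θ i)) := by
      rw [Finset.sum_congr rfl fun i _ => gradient_psi θ i]
      simp only [etaF]
      rw [← Finset.sum_div]
    rw [this]
    rw [div_lt_one (Spos θ)]
    linarith

lemma hasFDerivAt_phi {y : E n} (hy : y ∈ Δset n) :
    HasFDerivAt phi
      ((∑ i, (Real.log (y i) + 1) • projL i)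
        - (Real.log (1 - ∑ i, y i) + 1) • (∑ i, projL i)) y := by
  obtain ⟨hpos, hlt⟩ := hy
  have h1 : HasFDerivAt (fun z : E n => ∑ i, z i * Real.log (z i))
      (∑ i, (Real.log (y i) + 1) • projL i) y := by
    apply HasFDerivAt.fun_sum
    intro i _
    exact (Real.hasDerivAt_mul_log (hpos i).ne').comp_hasFDerivAt y (projL i).hasFDerivAt
  have h2 : HasFDerivAt (fun z : E n => 1 - ∑ i, z i) (-(∑ i, projL i)) y :=
    (hasFDerivAt_sum y).const_sub 1
  have h3 : HasFDerivAt (fun z : E n => (1 - ∑ i, z i) * Real.log (1 - ∑ i, z i))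
      ((Real.log (1 - ∑ i, y i) + 1) • (-(∑ i, projL i))) y :=
    (Real.hasDerivAt_mul_log (by linarith : (1:ℝ) - ∑ i, y i ≠ 0)).comp_hasFDerivAt (f := fun z : E n => 1 - ∑ i, z i) y h2
  have := h1.add h3
  have he : phi = fun z : E n =>
      (∑ i, z i * Real.log (z i)) + (1 - ∑ i, z i) * Real.log (1 - ∑ i, z i) := by
    funext z
    simp [phi, mul_comm]
  rw [he]
  exact this.congr_fderiv (by rw [smul_neg]; abel)

lemma fderiv_phi_apply {y : E n} (hy : y ∈ Δset n) (j : Fin n) :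
    fderiv ℝ phi y (EuclideanSpace.single j 1) =
      Real.log (y j) - Real.log (1 - ∑ i, y i) := by
  rw [(hasFDerivAt_phi hy).fderiv]
  simp only [ContinuousLinearMap.sub_apply, ContinuousLinearMap.sum_apply,
    ContinuousLinearMap.smul_apply, projL_single, smul_eq_mul, mul_ite, mul_one, mul_zero,
    Finset.sum_ite_eq', Finset.mem_univ, if_true]
  ring

lemma hess_phi_apply {η : E n} (hη : η ∈ Δset n) (i j : Fin n) :
    fderiv ℝ (fun y => fderiv ℝ phi y (EuclideanSpace.single j 1)) η (EuclideanSpace.single i 1)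
      = (if i = j then (η j)⁻¹ else 0) + (1 - ∑ k, η k)⁻¹ := by
  obtain ⟨hpos, hlt⟩ := hη
  have hee : (fun y : E n => fderiv ℝ phi y (EuclideanSpace.single j 1))
      =ᶠ[nhds η] (fun y : E n => Real.log (y j) - Real.log (1 - ∑ k, y k)) := by
    filter_upwards [isOpen_Δ.mem_nhds ⟨hpos, hlt⟩] with y hy
    exact fderiv_phi_apply hy j
  rw [hee.fderiv_eq]
  have h1 : HasFDerivAt (fun y : E n => Real.log (y j)) ((η j)⁻¹ • projL j) η :=
    (Real.hasDerivAt_log (hpos j).ne').comp_hasFDerivAt (f := fun z : E n => z j) η (projL j).hasFDerivAt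
  have h2 : HasFDerivAt (fun z : E n => 1 - ∑ k, z k) (-(∑ k, projL k)) η :=
    (hasFDerivAt_sum η).const_sub 1
  have h3 : HasFDerivAt (fun y : E n => Real.log (1 - ∑ k, y k))
      ((1 - ∑ k, η k)⁻¹ • (-(∑ k, projL k))) η :=
    (Real.hasDerivAt_log (by linarith : (1:ℝ) - ∑ k, η k ≠ 0)).comp_hasFDerivAt (f := fun z : E n => 1 - ∑ k, z k) η h2
  rw [(h1.fun_sub h3).fderiv]
  simp only [ContinuousLinearMap.sub_apply, ContinuousLinearMap.smul_apply, smul_neg,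
    ContinuousLinearMap.neg_apply, ContinuousLinearMap.sum_apply, projL_single,
    smul_eq_mul, mul_ite, mul_one, mul_zero, Finset.sum_ite_eq', Finset.mem_univ, if_true]
  by_cases h : i = j
  · subst h; simp
  · rw [if_neg (fun hh : j = i => h hh.symm), if_neg h]
    ring


end aux

/-- `η = ∇ψ(θ)` lies in `Δ_n` and `∇²φ(η) · ∇²ψ(θ) = I`. -/
theorem stmt_4 {n : ℕ} (θ : E n) :
    (∀ i, gradient psi θ i = Real.exp (θ i) / (1 + ∑ j, Real.exp (θ j))) ∧
    gradient psi θ ∈ Δset n ∧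
    hess phi (gradient psi θ) * hess psi θ = 1 := by
  have hη := grad_mem_Δ θ
  refine ⟨fun i => gradient_psi θ i, hη, ?_⟩
  have hsum : ∑ m, gradient psi θ m = ∑ m, etaF m θ :=
    Finset.sum_congr rfl fun m _ => gradient_psi θ m
  have hpos : ∀ j, (0:ℝ) < etaF j θ := fun j => div_pos (Real.exp_pos _) (Spos θ)
  have hT : ∑ m, etaF m θ < 1 := by rw [← hsum]; exact hη.2
  set a : Fin n → ℝ := fun j => etaF j θ with ha
  set T : ℝ := ∑ m, etaF m θ with hTdef
  set c : ℝ := (1 - T)⁻¹ with hc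
  apply Matrix.ext
  intro i k
  rw [Matrix.mul_apply, Matrix.one_apply]
  have hA : ∀ j, hess phi (gradient psi θ) i j = (if i = j then (a j)⁻¹ else 0) + c := by
    intro j
    show fderiv ℝ (fun y => fderiv ℝ phi y (EuclideanSpace.single j 1)) (gradient psi θ)
        (EuclideanSpace.single i 1) = _
    rw [hess_phi_apply hη i j, gradient_psi θ j, hsum]
  have hB : ∀ j, hess psi θ j k = (if j = k then a k else 0) - a j * a k := by
    intro j
    show fderiv ℝ (fun y => fderiv ℝ psi y (EuclideanSpace.single k 1)) θ
        (EuclideanSpace.single j 1) = _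
    rw [hess_psi_apply θ j k]
  calc ∑ j, hess phi (gradient psi θ) i j * hess psi θ j k
      = ∑ j, ((if i = j then (a j)⁻¹ else 0) + c) * ((if j = k then a k else 0) - a j * a k) := by
        exact Finset.sum_congr rfl fun j _ => by rw [hA j, hB j]
    _ = ∑ j, ((if i = j then (a j)⁻¹ * ((if j = k then a k else 0) - a j * a k) else 0)
          + c * ((if j = k then a k else 0) - a j * a k)) := by
        refine Finset.sum_congr rfl fun j _ => ?_
        split_ifs <;> ring
    _ = (a i)⁻¹ * ((if i = k then a k else 0) - a i * a k)
          + c * ((∑ j, (if j = k then a k else 0)) - T * a k) := by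
        rw [Finset.sum_add_distrib, Finset.sum_ite_eq, if_pos (Finset.mem_univ i),
          ← Finset.mul_sum, Finset.sum_sub_distrib, ← Finset.sum_mul]
    _ = if i = k then 1 else 0 := by
        rw [Finset.sum_ite_eq', if_pos (Finset.mem_univ k)]
        have hai : a i ≠ 0 := (hpos i).ne'
        have h1T : (1:ℝ) - T ≠ 0 := by linarith
        by_cases h : i = k
        · subst h
          rw [if_pos rfl, if_pos rfl, hc]
          field_simp
          ring
        · rw [if_neg h, if_neg h, hc]
          field_simp
          ring

end
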